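/- (Compositionality of security, unbounded time) Let 𝕊 and 𝕊′ be quantum systems with disjoint command sets C ∩ C′ = ∅, and let ↝ (on A) and ↝′ (on A′) be compatible policies. Then K(𝕊 ⊗ 𝕊′, ↝ ∪ ↝′) ≤ K(𝕊, ↝) + K(𝕊′, ↝′). -/

import Mathlib

open scoped Classical ComplexOrder
open Matrix Kronecker

noncomputable section

/-- A density operator: positive semidefinite with trace 1. -/
def IsDensity {d : Type} [Fintype d] [DecidableEq d] (ρ : Matrix d d ℂ) : Prop :=
  ρ.PosSemidef ∧ ρ.trace = 1

/-- A super-operator: a linear, positive, trace-preserving map on matrices. -/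
def IsSuperOp {d : Type} [Fintype d] [DecidableEq d]
    (F : Matrix d d ℂ → Matrix d d ℂ) : Prop :=
  IsLinearMap ℂ F ∧ (∀ ρ : Matrix d d ℂ, ρ.PosSemidef → (F ρ).PosSemidef) ∧
    (∀ ρ : Matrix d d ℂ, (F ρ).trace = ρ.trace)

/-- A finite family of matrices (the data of a measurement). -/
structure PMeas (d : Type) where
  m : ℕ
  E : Fin m → Matrix d d ℂ

/-- The family is a POVM: positive semidefinite elements summing to the identity. -/
def PMeas.IsPOVM {d : Type} [Fintype d] [DecidableEq d] (P : PMeas d) : Prop :=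
  (∀ i, (P.E i).PosSemidef) ∧ ∑ i, P.E i = 1

/-- The distance between outcome distributions of a measurement on two states. -/
def dE {d : Type} [Fintype d] (P : PMeas d) (ρ σ : Matrix d d ℂ) : ℝ :=
  (1 / 2) * ∑ i, ‖(P.E i * ρ).trace - (P.E i * σ).trace‖

/-- The measurement pseudo-distance induced by a set of measurements. -/
def dM {d : Type} [Fintype d] (M : Set (PMeas d)) (ρ σ : Matrix d d ℂ) : ℝ :=
  sSup { x | ∃ P ∈ M, x = dE P ρ σ }

/-- A quantum system: initial state, agents, commands, super-operators, measurements. -/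
structure QSystem (Agent Cmd d : Type) where
  ρ0 : Matrix d d ℂ
  A : Set Agent
  C : Set Cmd
  Ecmd : Agent → Cmd → Matrix d d ℂ → Matrix d d ℂ
  M : Agent → Set (PMeas d)

/-- Well-formedness: the initial state is a density operator, commands act as
super-operators, and agents measure with POVMs. -/
def QSystem.WellFormed {Agent Cmd d : Type} [Fintype d] [DecidableEq d]
    (S : QSystem Agent Cmd d) : Prop :=
  IsDensity S.ρ0 ∧ (∀ a ∈ S.A, ∀ c ∈ S.C, IsSuperOp (S.Ecmd a c)) ∧
    (∀ a ∈ S.A, ∀ P ∈ S.M a, P.IsPOVM)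

/-- Execution of a finite action sequence (composition of super-operators, in order). -/
def QSystem.run {Agent Cmd d : Type} (S : QSystem Agent Cmd d)
    (α : List (Agent × Cmd)) (ρ : Matrix d d ℂ) : Matrix d d ℂ :=
  α.foldl (fun τ p => S.Ecmd p.1 p.2 τ) ρ

/-- A sequence over A × C. -/
def QSystem.Valid {Agent Cmd d : Type} (S : QSystem Agent Cmd d)
    (α : List (Agent × Cmd)) : Prop :=
  ∀ p ∈ α, p.1 ∈ S.A ∧ p.2 ∈ S.C

/-- `purge G D α` deletes from `α` every pair `(a, c)` with `a ∈ G` and `c ∈ D`. -/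
def purge {Agent Cmd : Type} (G : Set Agent) (D : Set Cmd) :
    List (Agent × Cmd) → List (Agent × Cmd)
  | [] => []
  | p :: rest => if p.1 ∈ G ∧ p.2 ∈ D then purge G D rest else p :: purge G D rest

/-- A reachable density operator. -/
def QSystem.Reachable {Agent Cmd d : Type} (S : QSystem Agent Cmd d)
    (ρ : Matrix d d ℂ) : Prop :=
  ∃ α, S.Valid α ∧ S.run α S.ρ0 = ρ

/-- `∇ a`: the set of agents from which information may not flow to `a`. -/
def nabla {Agent : Type} (pol : Agent → Agent → Prop) (a : Agent) : Set Agent :=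
  { b | ¬ pol b a }

/-- The security degree `K(𝕊,↝)`. -/
def Kdeg {Agent Cmd d : Type} [Fintype d] (S : QSystem Agent Cmd d)
    (pol : Agent → Agent → Prop) : ℝ :=
  sSup { x | ∃ a ∈ S.A, ∃ α, S.Valid α ∧
    x = dM (S.M a) (S.run α S.ρ0) (S.run (purge (nabla pol a) Set.univ α) S.ρ0) }

/-- The `t`-bounded security degree `K_t(𝕊,↝)`. -/
def Kt {Agent Cmd d : Type} [Fintype d] (S : QSystem Agent Cmd d)
    (pol : Agent → Agent → Prop) (t : ℕ) : ℝ :=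
  sSup { x | ∃ a ∈ S.A, ∃ α, S.Valid α ∧ α.length ≤ t ∧
    x = dM (S.M a) (S.run α S.ρ0) (S.run (purge (nabla pol a) Set.univ α) S.ρ0) }

/-- The interference degree `Int(G₁, D | G₂)`. -/
def IntDeg {Agent Cmd d : Type} [Fintype d] (S : QSystem Agent Cmd d)
    (G1 : Set Agent) (D : Set Cmd) (G2 : Set Agent) : ℝ :=
  sSup { x | ∃ a ∈ G2, ∃ α, S.Valid α ∧
    x = dM (S.M a) (S.run α S.ρ0) (S.run (purge G1 D α) S.ρ0) }

/-- Trace distance `d(ρ,σ) = (1/2)·tr √((ρ−σ)†(ρ−σ))`. -/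
def traceDist {d : Type} [Fintype d] [DecidableEq d] (ρ σ : Matrix d d ℂ) : ℝ :=
  (1 / 2) * (((Matrix.posSemidef_conjTranspose_mul_self (ρ - σ)).1.eigenvectorUnitary.1 *
    Matrix.diagonal (((↑) : ℝ → ℂ) ∘ (√·) ∘ (Matrix.posSemidef_conjTranspose_mul_self (ρ - σ)).1.eigenvalues) *
    (star (Matrix.posSemidef_conjTranspose_mul_self (ρ - σ)).1.eigenvectorUnitary : Matrix d d ℂ)).trace).re

end
noncomputable section

/-- Lift a measurement on the first subsystem to the composite system: `E_λ ↦ E_λ ⊗ I`. -/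
def PMeas.liftLeft {d1 d2 : Type} [Fintype d2] [DecidableEq d2]
    (P : PMeas d1) : PMeas (d1 × d2) where
  m := P.m
  E := fun i => P.E i ⊗ₖ (1 : Matrix d2 d2 ℂ)

/-- Lift a measurement on the second subsystem to the composite system: `E_λ ↦ I ⊗ E_λ`. -/
def PMeas.liftRight {d1 d2 : Type} [Fintype d1] [DecidableEq d1]
    (P : PMeas d2) : PMeas (d1 × d2) where
  m := P.m
  E := fun i => (1 : Matrix d1 d1 ℂ) ⊗ₖ P.E i

/-- The map `𝓔 ⊗ id` on the composite system, for `𝓔` acting on the first factor. -/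
def superLiftLeft {d1 d2 : Type} (F : Matrix d1 d1 ℂ → Matrix d1 d1 ℂ) :
    Matrix (d1 × d2) (d1 × d2) ℂ → Matrix (d1 × d2) (d1 × d2) ℂ :=
  fun σ => Matrix.of fun p q =>
    F (Matrix.of fun i j => σ (i, p.2) (j, q.2)) p.1 q.1

/-- The map `id ⊗ 𝓔′` on the composite system, for `𝓔′` acting on the second factor. -/
def superLiftRight {d1 d2 : Type} (F : Matrix d2 d2 ℂ → Matrix d2 d2 ℂ) :
    Matrix (d1 × d2) (d1 × d2) ℂ → Matrix (d1 × d2) (d1 × d2) ℂ :=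
  fun σ => Matrix.of fun p q =>
    F (Matrix.of fun k l => σ (p.1, k) (q.1, l)) p.2 q.2

/-- The composition `𝕊 ⊗ 𝕊′` of two quantum systems. -/
def QSystem.comp {Agent Cmd d1 d2 : Type}
    [Fintype d1] [DecidableEq d1] [Fintype d2] [DecidableEq d2]
    (S : QSystem Agent Cmd d1) (S' : QSystem Agent Cmd d2) :
    QSystem Agent Cmd (d1 × d2) where
  ρ0 := S.ρ0 ⊗ₖ S'.ρ0
  A := S.A ∪ S'.A
  C := S.C ∪ S'.C
  Ecmd := fun a c =>
    if a ∈ S.A ∧ c ∈ S.C then superLiftLeft (S.Ecmd a c)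
    else if a ∈ S'.A ∧ c ∈ S'.C then superLiftRight (S'.Ecmd a c)
    else id
  M := fun a =>
    (if a ∈ S.A then PMeas.liftLeft '' S.M a else ∅) ∪
    (if a ∈ S'.A then PMeas.liftRight '' S'.M a else ∅)

/-- Two policies are compatible if they agree on common agents. -/
def Compatible {Agent : Type} (A A' : Set Agent)
    (pol pol' : Agent → Agent → Prop) : Prop :=
  ∀ a ∈ A ∩ A', ∀ b ∈ A ∩ A', (pol a b ↔ pol' a b)

/-- The union `↝ ∪ ↝′` of a policy on `A` and a policy on `A′`. -/
def polUnion {Agent : Type} (A A' : Set Agent)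
    (pol pol' : Agent → Agent → Prop) : Agent → Agent → Prop :=
  fun a b => (a ∈ A ∧ b ∈ A ∧ pol a b) ∨ (a ∈ A' ∧ b ∈ A' ∧ pol' a b)

end
noncomputable section

/-! ### Auxiliary lemmas -/

open Matrix

section aux

variable {d : Type} [Fintype d] [DecidableEq d]

lemma trace_nonneg_of_posSemidef {M : Matrix d d ℂ} (hM : M.PosSemidef) :
    0 ≤ M.trace := by
  exact hM.trace_nonneg

lemma trace_mul_nonneg' {A B : Matrix d d ℂ} (hA : A.PosSemidef) (hB : B.PosSemidef) :
    0 ≤ (A * B).trace := by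
  obtain ⟨m, v, hv⟩ := Matrix.posSemidef_iff_eq_sum_vecMulVec.mp hA
  have hC : A = (Matrix.of fun i j => star (v i j))ᴴ * Matrix.of fun i j => star (v i j) := by
    rw [hv]; ext j k; simp [Matrix.mul_apply, Matrix.sum_apply, Matrix.vecMulVec_apply]
  rw [hC, ← Matrix.trace_mul_cycle]
  exact trace_nonneg_of_posSemidef (hB.mul_mul_conjTranspose_same _)

lemma abs_sub_le_re_add_re {z w : ℂ} (hz : 0 ≤ z) (hw : 0 ≤ w) :
    ‖z - w‖ ≤ z.re + w.re := by
  obtain ⟨hzre, hzim⟩ := Complex.le_def.mp hz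
  obtain ⟨hwre, hwim⟩ := Complex.le_def.mp hw
  simp only [Complex.zero_re, Complex.zero_im] at hzre hzim hwre hwim
  have hzw : z - w = ((z.re - w.re : ℝ) : ℂ) := by
    apply Complex.ext <;> simp [← hzim, ← hwim]
  rw [hzw, Complex.norm_real, Real.norm_eq_abs]
  calc |z.re - w.re| ≤ |z.re| + |w.re| := abs_sub _ _
    _ = z.re + w.re := by rw [abs_of_nonneg hzre, abs_of_nonneg hwre]

lemma dE_nonneg (P : PMeas d) (ρ σ : Matrix d d ℂ) : 0 ≤ dE P ρ σ := by
  unfold dE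
  apply mul_nonneg (by norm_num)
  exact Finset.sum_nonneg fun i _ => norm_nonneg _

lemma dE_le_one {P : PMeas d} (hP : P.IsPOVM) {ρ σ : Matrix d d ℂ}
    (hρ : IsDensity ρ) (hσ : IsDensity σ) : dE P ρ σ ≤ 1 := by
  have key : ∀ τ : Matrix d d ℂ, τ.trace = 1 →
      ∑ i, ((P.E i * τ).trace).re = 1 := by
    intro τ ht
    have h1 : ∑ i, (P.E i * τ).trace = 1 := by
      calc ∑ i, (P.E i * τ).trace = ((∑ i, P.E i) * τ).trace := by
            rw [Finset.sum_mul, Matrix.trace_sum]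
        _ = 1 := by rw [hP.2, Matrix.one_mul, ht]
    rw [← Complex.re_sum, h1, Complex.one_re]
  have hbound : ∀ i, ‖(P.E i * ρ).trace - (P.E i * σ).trace‖
      ≤ ((P.E i * ρ).trace).re + ((P.E i * σ).trace).re := fun i =>
    abs_sub_le_re_add_re (trace_mul_nonneg' (hP.1 i) hρ.1)
      (trace_mul_nonneg' (hP.1 i) hσ.1)
  unfold dE
  calc (1 / 2 : ℝ) * ∑ i, ‖(P.E i * ρ).trace - (P.E i * σ).trace‖
      ≤ (1 / 2 : ℝ) * ∑ i, (((P.E i * ρ).trace).re + ((P.E i * σ).trace).re) := by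
        apply mul_le_mul_of_nonneg_left (Finset.sum_le_sum fun i _ => hbound i)
        norm_num
    _ = (1 / 2 : ℝ) * (1 + 1) := by
        rw [Finset.sum_add_distrib, key ρ hρ.2, key σ hσ.2]
    _ = 1 := by norm_num

lemma dM_nonneg (M : Set (PMeas d)) (ρ σ : Matrix d d ℂ) : 0 ≤ dM M ρ σ :=
  Real.sSup_nonneg (by rintro x ⟨P, hP, rfl⟩; exact dE_nonneg P ρ σ)

lemma dM_le_one {M : Set (PMeas d)} (hM : ∀ P ∈ M, P.IsPOVM) {ρ σ : Matrix d d ℂ}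
    (hρ : IsDensity ρ) (hσ : IsDensity σ) : dM M ρ σ ≤ 1 :=
  Real.sSup_le (by rintro x ⟨P, hP, rfl⟩; exact dE_le_one (hM P hP) hρ hσ) zero_le_one

lemma dE_le_dM {M : Set (PMeas d)} (hM : ∀ P ∈ M, P.IsPOVM) {ρ σ : Matrix d d ℂ}
    (hρ : IsDensity ρ) (hσ : IsDensity σ) {P : PMeas d} (hP : P ∈ M) :
    dE P ρ σ ≤ dM M ρ σ :=
  le_csSup ⟨1, by rintro x ⟨Q, hQ, rfl⟩; exact dE_le_one (hM Q hQ) hρ hσ⟩ ⟨P, hP, rfl⟩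

variable {Agent Cmd : Type}

lemma run_density {S : QSystem Agent Cmd d} (hS : S.WellFormed) :
    ∀ (α : List (Agent × Cmd)), S.Valid α → ∀ ρ, IsDensity ρ → IsDensity (S.run α ρ)
  | [], _, ρ, hρ => hρ
  | p :: rest, hα, ρ, hρ => by
    have hp := hα p (List.mem_cons_self)
    have hrest : S.Valid rest := fun q hq => hα q (List.mem_cons_of_mem _ hq)
    have hsup := hS.2.1 p.1 hp.1 p.2 hp.2
    have hd : IsDensity (S.Ecmd p.1 p.2 ρ) := ⟨hsup.2.1 ρ hρ.1, by rw [hsup.2.2, hρ.2]⟩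
    simpa [QSystem.run] using run_density hS rest hrest _ hd

lemma purge_univ_eq_filter (G : Set Agent) :
    ∀ α : List (Agent × Cmd), purge G Set.univ α = α.filter (fun p => decide (p.1 ∉ G))
  | [] => rfl
  | p :: rest => by
    by_cases h : p.1 ∈ G <;>
      simp [purge, h, purge_univ_eq_filter G rest, List.filter_cons]

lemma purge_subset {G : Set Agent} {α : List (Agent × Cmd)} {p : Agent × Cmd}
    (hp : p ∈ purge G Set.univ α) : p ∈ α := by
  rw [purge_univ_eq_filter] at hp
  exact List.mem_of_mem_filter hp

lemma filter_purge_comm (G : Set Agent) (f : Agent × Cmd → Bool)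
    (α : List (Agent × Cmd)) :
    (purge G Set.univ α).filter f = purge G Set.univ (α.filter f) := by
  rw [purge_univ_eq_filter, purge_univ_eq_filter, List.filter_filter,
    List.filter_filter]
  exact List.filter_congr fun p _ => Bool.and_comm _ _

lemma purge_congr {G G' : Set Agent} {α : List (Agent × Cmd)}
    (h : ∀ p ∈ α, (p.1 ∈ G ↔ p.1 ∈ G')) :
    purge G Set.univ α = purge G' Set.univ α := by
  rw [purge_univ_eq_filter, purge_univ_eq_filter]
  exact List.filter_congr fun p hp => decide_eq_decide.mpr (not_congr (h p hp))

lemma polUnion_left {A A' : Set Agent} {pol pol' : Agent → Agent → Prop}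
    (hc : Compatible A A' pol pol') {a b : Agent} (ha : a ∈ A) (hb : b ∈ A) :
    polUnion A A' pol pol' b a ↔ pol b a := by
  constructor
  · rintro (⟨-, -, h⟩ | ⟨hbA', haA', h⟩)
    · exact h
    · exact (hc b ⟨hb, hbA'⟩ a ⟨ha, haA'⟩).mpr h
  · intro h; exact Or.inl ⟨hb, ha, h⟩

lemma polUnion_right {A A' : Set Agent} {pol pol' : Agent → Agent → Prop}
    (hc : Compatible A A' pol pol') {a b : Agent} (ha : a ∈ A') (hb : b ∈ A') :
    polUnion A A' pol pol' b a ↔ pol' b a := by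
  constructor
  · rintro (⟨hbA, haA, h⟩ | ⟨-, -, h⟩)
    · exact (hc b ⟨hbA, hb⟩ a ⟨haA, ha⟩).mp h
    · exact h
  · intro h; exact Or.inr ⟨hb, ha, h⟩

lemma Kdeg_nonneg (S : QSystem Agent Cmd d) (pol : Agent → Agent → Prop) :
    0 ≤ Kdeg S pol :=
  Real.sSup_nonneg (by rintro x ⟨a, ha, α, hα, rfl⟩; exact dM_nonneg _ _ _)

lemma valid_purge {S : QSystem Agent Cmd d} {α : List (Agent × Cmd)}
    (hα : S.Valid α) (G : Set Agent) : S.Valid (purge G Set.univ α) :=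
  fun p hp => hα p (purge_subset hp)

lemma dM_le_Kdeg {S : QSystem Agent Cmd d} (hS : S.WellFormed)
    (pol : Agent → Agent → Prop) {a : Agent} {α : List (Agent × Cmd)}
    (ha : a ∈ S.A) (hα : S.Valid α) :
    dM (S.M a) (S.run α S.ρ0) (S.run (purge (nabla pol a) Set.univ α) S.ρ0)
      ≤ Kdeg S pol := by
  apply le_csSup
  · refine ⟨1, ?_⟩
    rintro x ⟨b, hb, β, hβ, rfl⟩
    exact dM_le_one (hS.2.2 b hb) (run_density hS β hβ _ hS.1)
      (run_density hS _ (valid_purge hβ _) _ hS.1)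
  · exact ⟨a, ha, α, hα, rfl⟩

end aux

section auxcomp

variable {d1 d2 : Type} [Fintype d1] [DecidableEq d1] [Fintype d2] [DecidableEq d2]

lemma superLiftLeft_kron {F : Matrix d1 d1 ℂ → Matrix d1 d1 ℂ}
    (hF : IsLinearMap ℂ F) (X : Matrix d1 d1 ℂ) (Y : Matrix d2 d2 ℂ) :
    superLiftLeft (d2 := d2) F (X ⊗ₖ Y) = F X ⊗ₖ Y := by
  ext ⟨p1, p2⟩ ⟨q1, q2⟩
  simp only [superLiftLeft, Matrix.of_apply, Matrix.kroneckerMap_apply]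
  have h : (Matrix.of fun i j => X i j * Y p2 q2) = Y p2 q2 • X := by
    ext i j
    simp [mul_comm]
  rw [h, hF.map_smul]
  simp [mul_comm]

lemma superLiftRight_kron {F : Matrix d2 d2 ℂ → Matrix d2 d2 ℂ}
    (hF : IsLinearMap ℂ F) (X : Matrix d1 d1 ℂ) (Y : Matrix d2 d2 ℂ) :
    superLiftRight (d1 := d1) F (X ⊗ₖ Y) = X ⊗ₖ F Y := by
  ext ⟨p1, p2⟩ ⟨q1, q2⟩
  simp only [superLiftRight, Matrix.of_apply, Matrix.kroneckerMap_apply]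
  have h : (Matrix.of fun k l => X p1 q1 * Y k l) = X p1 q1 • Y := by
    ext k l
    simp
  rw [h, hF.map_smul]
  simp

lemma dE_liftLeft (P : PMeas d1) {X X' : Matrix d1 d1 ℂ} {Y Y' : Matrix d2 d2 ℂ}
    (hY : Y.trace = 1) (hY' : Y'.trace = 1) :
    dE (P.liftLeft (d2 := d2)) (X ⊗ₖ Y) (X' ⊗ₖ Y') = dE P X X' := by
  simp only [dE, PMeas.liftLeft, ← Matrix.mul_kronecker_mul, Matrix.trace_kronecker,
    Matrix.one_mul, hY, hY', mul_one]
  rfl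

lemma dE_liftRight (P : PMeas d2) {X X' : Matrix d1 d1 ℂ} {Y Y' : Matrix d2 d2 ℂ}
    (hX : X.trace = 1) (hX' : X'.trace = 1) :
    dE (P.liftRight (d1 := d1)) (X ⊗ₖ Y) (X' ⊗ₖ Y') = dE P Y Y' := by
  simp only [dE, PMeas.liftRight, ← Matrix.mul_kronecker_mul, Matrix.trace_kronecker,
    Matrix.one_mul, hX, hX', one_mul]
  rfl

variable {Agent Cmd : Type}

lemma valid_filter_left (S : QSystem Agent Cmd d1) (S' : QSystem Agent Cmd d2)
    (α : List (Agent × Cmd)) :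
    S.Valid (α.filter fun p => decide (p.1 ∈ S.A ∧ p.2 ∈ S.C)) :=
  fun p hp => by simpa using (List.mem_filter.mp hp).2

lemma valid_filter_right (S : QSystem Agent Cmd d1) (S' : QSystem Agent Cmd d2)
    (α : List (Agent × Cmd)) :
    S'.Valid (α.filter fun p => decide (p.1 ∈ S'.A ∧ p.2 ∈ S'.C)) :=
  fun p hp => by simpa using (List.mem_filter.mp hp).2

lemma run_cons {d : Type} (S : QSystem Agent Cmd d) (p : Agent × Cmd)
    (l : List (Agent × Cmd)) (ρ : Matrix d d ℂ) :
    S.run (p :: l) ρ = S.run l (S.Ecmd p.1 p.2 ρ) := rfl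

lemma comp_run_kron {S : QSystem Agent Cmd d1} {S' : QSystem Agent Cmd d2}
    (hS : S.WellFormed) (hS' : S'.WellFormed) (hC : S.C ∩ S'.C = ∅) :
    ∀ (α : List (Agent × Cmd)) (X : Matrix d1 d1 ℂ) (Y : Matrix d2 d2 ℂ),
    (S.comp S').run α (X ⊗ₖ Y) =
      S.run (α.filter fun p => decide (p.1 ∈ S.A ∧ p.2 ∈ S.C)) X ⊗ₖ
      S'.run (α.filter fun p => decide (p.1 ∈ S'.A ∧ p.2 ∈ S'.C)) Y
  | [], X, Y => rfl
  | p :: rest, X, Y => by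
    by_cases h1 : p.1 ∈ S.A ∧ p.2 ∈ S.C
    · have h2 : ¬(p.1 ∈ S'.A ∧ p.2 ∈ S'.C) := by
        rintro ⟨-, hc'⟩
        have hmem : p.2 ∈ S.C ∩ S'.C := ⟨h1.2, hc'⟩
        rw [hC] at hmem
        exact hmem
      have hE : (S.comp S').Ecmd p.1 p.2 (X ⊗ₖ Y) = (S.Ecmd p.1 p.2 X) ⊗ₖ Y := by
        have hlin := (hS.2.1 p.1 h1.1 p.2 h1.2).1
        simp only [QSystem.comp, if_pos h1]
        exact superLiftLeft_kron hlin X Y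
      have hfil1 : (p :: rest).filter (fun p => decide (p.1 ∈ S.A ∧ p.2 ∈ S.C))
          = p :: rest.filter (fun p => decide (p.1 ∈ S.A ∧ p.2 ∈ S.C)) := by
        simp [List.filter_cons, h1]
      have hfil2 : (p :: rest).filter (fun p => decide (p.1 ∈ S'.A ∧ p.2 ∈ S'.C))
          = rest.filter (fun p => decide (p.1 ∈ S'.A ∧ p.2 ∈ S'.C)) := by
        simp [List.filter_cons, h2]
      rw [run_cons, hE, hfil1, hfil2, run_cons]
      exact comp_run_kron hS hS' hC rest (S.Ecmd p.1 p.2 X) Y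
    · by_cases h2 : p.1 ∈ S'.A ∧ p.2 ∈ S'.C
      · have hE : (S.comp S').Ecmd p.1 p.2 (X ⊗ₖ Y) = X ⊗ₖ (S'.Ecmd p.1 p.2 Y) := by
          have hlin := (hS'.2.1 p.1 h2.1 p.2 h2.2).1
          simp only [QSystem.comp, if_neg h1, if_pos h2]
          exact superLiftRight_kron hlin X Y
        have hfil1 : (p :: rest).filter (fun p => decide (p.1 ∈ S.A ∧ p.2 ∈ S.C))
            = rest.filter (fun p => decide (p.1 ∈ S.A ∧ p.2 ∈ S.C)) := by
          simp [List.filter_cons, h1]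
        have hfil2 : (p :: rest).filter (fun p => decide (p.1 ∈ S'.A ∧ p.2 ∈ S'.C))
            = p :: rest.filter (fun p => decide (p.1 ∈ S'.A ∧ p.2 ∈ S'.C)) := by
          simp [List.filter_cons, h2]
        rw [run_cons, hE, hfil1, hfil2, run_cons]
        exact comp_run_kron hS hS' hC rest X (S'.Ecmd p.1 p.2 Y)
      · have hE : (S.comp S').Ecmd p.1 p.2 (X ⊗ₖ Y) = X ⊗ₖ Y := by
          simp only [QSystem.comp, if_neg h1, if_neg h2]
          rfl
        have hfil1 : (p :: rest).filter (fun p => decide (p.1 ∈ S.A ∧ p.2 ∈ S.C))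
            = rest.filter (fun p => decide (p.1 ∈ S.A ∧ p.2 ∈ S.C)) := by
          simp [List.filter_cons, h1]
        have hfil2 : (p :: rest).filter (fun p => decide (p.1 ∈ S'.A ∧ p.2 ∈ S'.C))
            = rest.filter (fun p => decide (p.1 ∈ S'.A ∧ p.2 ∈ S'.C)) := by
          simp [List.filter_cons, h2]
        rw [run_cons, hE, hfil1, hfil2]
        exact comp_run_kron hS hS' hC rest X Y

end auxcomp

end
noncomputable section

/-- **Compositionality of security (unbounded time).** For quantum systems with disjoint
command sets and compatible policies,
`K(𝕊 ⊗ 𝕊′, ↝ ∪ ↝′) ≤ K(𝕊, ↝) + K(𝕊′, ↝′)`. -/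
theorem compositionality_K {Agent Cmd : Type} {n n' : ℕ} (hn : 0 < n) (hn' : 0 < n')
    (S : QSystem Agent Cmd (Fin n)) (S' : QSystem Agent Cmd (Fin n'))
    (hS : S.WellFormed) (hS' : S'.WellFormed)
    (hC : S.C ∩ S'.C = ∅)
    (pol pol' : Agent → Agent → Prop)
    (hpol : ∀ a ∈ S.A, pol a a) (hpol' : ∀ a ∈ S'.A, pol' a a)
    (hcompat : Compatible S.A S'.A pol pol') :
    Kdeg (S.comp S') (polUnion S.A S'.A pol pol') ≤ Kdeg S pol + Kdeg S' pol' := by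
  have hKnn : 0 ≤ Kdeg S pol + Kdeg S' pol' :=
    add_nonneg (Kdeg_nonneg S pol) (Kdeg_nonneg S' pol')
  refine Real.sSup_le ?_ hKnn
  rintro x ⟨a, ha, α, hα, rfl⟩
  set U := polUnion S.A S'.A pol pol' with hU
  set β := purge (nabla U a) Set.univ α with hβdef
  have hρ0c : (S.comp S').ρ0 = S.ρ0 ⊗ₖ S'.ρ0 := rfl
  have hrunα := comp_run_kron hS hS' hC α S.ρ0 S'.ρ0
  have hrunβ := comp_run_kron hS hS' hC β S.ρ0 S'.ρ0
  -- densities of the four component states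
  have dXL : IsDensity (S.run (α.filter fun p => decide (p.1 ∈ S.A ∧ p.2 ∈ S.C)) S.ρ0) :=
    run_density hS _ (valid_filter_left S S' α) _ hS.1
  have dXR : IsDensity (S'.run (α.filter fun p => decide (p.1 ∈ S'.A ∧ p.2 ∈ S'.C)) S'.ρ0) :=
    run_density hS' _ (valid_filter_right S S' α) _ hS'.1
  have dYL : IsDensity (S.run (β.filter fun p => decide (p.1 ∈ S.A ∧ p.2 ∈ S.C)) S.ρ0) :=
    run_density hS _ (valid_filter_left S S' β) _ hS.1
  have dYR : IsDensity (S'.run (β.filter fun p => decide (p.1 ∈ S'.A ∧ p.2 ∈ S'.C)) S'.ρ0) :=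
    run_density hS' _ (valid_filter_right S S' β) _ hS'.1
  unfold dM
  refine Real.sSup_le ?_ hKnn
  rintro y ⟨P', hP', rfl⟩
  have hMa : P' ∈ (if a ∈ S.A then PMeas.liftLeft '' S.M a else ∅) ∪
      (if a ∈ S'.A then PMeas.liftRight '' S'.M a else ∅) := hP'
  rw [hρ0c, hrunα, hrunβ]
  rcases hMa with hL | hR
  · -- measurement lifted from the left system
    have haS : a ∈ S.A := by
      by_contra h; rw [if_neg h] at hL; exact hL.elim
    rw [if_pos haS] at hL
    obtain ⟨P, hPmem, rfl⟩ := hL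
    rw [dE_liftLeft P dXR.2 dYR.2]
    have key : β.filter (fun p => decide (p.1 ∈ S.A ∧ p.2 ∈ S.C))
        = purge (nabla pol a) Set.univ
            (α.filter fun p => decide (p.1 ∈ S.A ∧ p.2 ∈ S.C)) := by
      rw [hβdef, filter_purge_comm]
      apply purge_congr
      intro p hp
      have hpA : p.1 ∈ S.A := ((valid_filter_left S S' α) p hp).1
      exact not_congr (polUnion_left hcompat haS hpA)
    calc dE P (S.run (α.filter fun p => decide (p.1 ∈ S.A ∧ p.2 ∈ S.C)) S.ρ0)
          (S.run (β.filter fun p => decide (p.1 ∈ S.A ∧ p.2 ∈ S.C)) S.ρ0)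
        ≤ dM (S.M a) (S.run (α.filter fun p => decide (p.1 ∈ S.A ∧ p.2 ∈ S.C)) S.ρ0)
            (S.run (β.filter fun p => decide (p.1 ∈ S.A ∧ p.2 ∈ S.C)) S.ρ0) :=
          dE_le_dM (hS.2.2 a haS) dXL dYL hPmem
      _ ≤ Kdeg S pol := by
          rw [key]
          exact dM_le_Kdeg hS pol haS (valid_filter_left S S' α)
      _ ≤ Kdeg S pol + Kdeg S' pol' := le_add_of_nonneg_right (Kdeg_nonneg S' pol')
  · -- measurement lifted from the right system
    have haS' : a ∈ S'.A := by
      by_contra h; rw [if_neg h] at hR; exact hR.elim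
    rw [if_pos haS'] at hR
    obtain ⟨P, hPmem, rfl⟩ := hR
    rw [dE_liftRight P dXL.2 dYL.2]
    have key : β.filter (fun p => decide (p.1 ∈ S'.A ∧ p.2 ∈ S'.C))
        = purge (nabla pol' a) Set.univ
            (α.filter fun p => decide (p.1 ∈ S'.A ∧ p.2 ∈ S'.C)) := by
      rw [hβdef, filter_purge_comm]
      apply purge_congr
      intro p hp
      have hpA : p.1 ∈ S'.A := ((valid_filter_right S S' α) p hp).1
      exact not_congr (polUnion_right hcompat haS' hpA)
    calc dE P (S'.run (α.filter fun p => decide (p.1 ∈ S'.A ∧ p.2 ∈ S'.C)) S'.ρ0)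
          (S'.run (β.filter fun p => decide (p.1 ∈ S'.A ∧ p.2 ∈ S'.C)) S'.ρ0)
        ≤ dM (S'.M a) (S'.run (α.filter fun p => decide (p.1 ∈ S'.A ∧ p.2 ∈ S'.C)) S'.ρ0)
            (S'.run (β.filter fun p => decide (p.1 ∈ S'.A ∧ p.2 ∈ S'.C)) S'.ρ0) :=
          dE_le_dM (hS'.2.2 a haS') dXR dYR hPmem
      _ ≤ Kdeg S' pol' := by
          rw [key]
          exact dM_le_Kdeg hS' pol' haS' (valid_filter_right S S' α)
      _ ≤ Kdeg S pol + Kdeg S' pol' := le_add_of_nonneg_left (Kdeg_nonneg S pol)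


end
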